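/- If tr((M₀ − r₀⁻¹)(M₁ − r₁)) = 0, then (M₀ − r₀)(M₁ − r₁⁻¹) = 0 or (M₀ − r₀⁻¹)(M₁ − r₁) = 0. Consequently, if in addition M₀M₁ ≠ M₁M₀, then the simultaneous triangularization problem is solvable: there exist f₀, f₁ ∈ ℂ and K ∈ SL(2,ℂ) with K·M₀ = M₀Δ·K and K·M₁ = M₁Δ·K. -/

import Mathlib

open Matrix Complex

private lemma hqqp (P Q : Matrix (Fin 2) (Fin 2) ℂ) (hP : P.det = 0) (hQ : Q.det = 0)
    (h : (P*Q).trace = 0) : ∀ i j k l : Fin 2, (P*Q) i j * (Q*P) k l = 0 := by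
  rw [Matrix.det_fin_two] at hP hQ
  rw [Matrix.trace_fin_two] at h
  simp only [Matrix.mul_apply, Fin.sum_univ_two] at h
  intro i j k l
  fin_cases i <;> fin_cases j <;> fin_cases k <;> fin_cases l <;>
    simp only [Matrix.mul_apply, Fin.sum_univ_two, Fin.mk_zero, Fin.mk_one, Fin.isValue]
  · linear_combination (P 0 0 * Q 0 0) * h + (-P 0 0 * P 1 1) * hQ + (-Q 1 0 * Q 0 1) * hP
  · linear_combination (P 0 1 * Q 0 0) * h + (-P 0 1 * P 1 1) * hQ + (Q 0 0 * Q 0 1) * hP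
  · linear_combination (P 0 0 * Q 1 0) * h + (P 0 0 * P 1 0) * hQ + (-Q 1 0 * Q 1 1) * hP
  · linear_combination (P 0 1 * Q 1 0) * h + (P 0 1 * P 1 0) * hQ + (Q 0 0 * Q 1 1) * hP
  · linear_combination (P 0 0 * Q 0 1) * h + (P 0 0 * P 0 1) * hQ + (-Q 1 1 * Q 0 1) * hP
  · linear_combination (P 0 1 * Q 0 1) * h + (P 0 1 * P 0 1) * hQ + (Q 0 1 * Q 0 1) * hP
  · linear_combination (P 0 0 * Q 1 1) * h + (-P 0 0 * P 0 0) * hQ + (-Q 1 1 * Q 1 1) * hP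
  · linear_combination (P 0 1 * Q 1 1) * h + (-P 0 1 * P 0 0) * hQ + (Q 0 1 * Q 1 1) * hP
  · linear_combination (P 1 0 * Q 0 0) * h + (-P 1 0 * P 1 1) * hQ + (Q 1 0 * Q 0 0) * hP
  · linear_combination (P 1 1 * Q 0 0) * h + (-P 1 1 * P 1 1) * hQ + (-Q 0 0 * Q 0 0) * hP
  · linear_combination (P 1 0 * Q 1 0) * h + (P 1 0 * P 1 0) * hQ + (Q 1 0 * Q 1 0) * hP
  · linear_combination (P 1 1 * Q 1 0) * h + (P 1 1 * P 1 0) * hQ + (-Q 0 0 * Q 1 0) * hP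
  · linear_combination (P 1 0 * Q 0 1) * h + (P 1 0 * P 0 1) * hQ + (Q 1 1 * Q 0 0) * hP
  · linear_combination (P 1 1 * Q 0 1) * h + (P 1 1 * P 0 1) * hQ + (-Q 0 1 * Q 0 0) * hP
  · linear_combination (P 1 0 * Q 1 1) * h + (-P 1 0 * P 0 0) * hQ + (Q 1 1 * Q 1 0) * hP
  · linear_combination (P 1 1 * Q 1 1) * h + (-P 1 1 * P 0 0) * hQ + (-Q 0 1 * Q 1 0) * hP

private lemma keylem (P Q : Matrix (Fin 2) (Fin 2) ℂ) (hP : P.det = 0) (hQ : Q.det = 0)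
    (h : (P*Q).trace = 0) : P * Q = 0 ∨ Q * P = 0 := by
  by_cases hpq : P * Q = 0
  · exact Or.inl hpq
  · right
    obtain ⟨i, j, hij⟩ : ∃ i j, (P*Q) i j ≠ 0 := by
      by_contra hc
      push_neg at hc
      exact hpq (by ext i j; simpa using hc i j)
    ext k l
    rcases mul_eq_zero.mp (hqqp P Q hP hQ h i j k l) with h' | h'
    · exact absurd h' hij
    · simpa using h'

private lemma solve2 (p q u v X Y : ℂ) (h1 : p*X + q*Y = 0) (h2 : u*X + v*Y = 0)
    (hD : p*v - q*u ≠ 0) : X = 0 ∧ Y = 0 := by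
  constructor
  · have h : (p*v - q*u) * X = 0 := by linear_combination v*h1 - q*h2
    exact (mul_eq_zero.mp h).resolve_left hD
  · have h : (p*v - q*u) * Y = 0 := by linear_combination p*h2 - u*h1
    exact (mul_eq_zero.mp h).resolve_left hD

private lemma prop2 (x₁ y₁ x₂ y₂ : ℂ) (h : x₁*y₂ - y₁*x₂ = 0) (hne : ¬(x₂ = 0 ∧ y₂ = 0)) :
    ∃ c, x₁ = c*x₂ ∧ y₁ = c*y₂ := by
  by_cases hx : x₂ = 0
  · have hy : y₂ ≠ 0 := fun hy => hne ⟨hx, hy⟩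
    refine ⟨y₁/y₂, ?_, by field_simp⟩
    rw [hx, mul_zero]
    have : x₁ * y₂ = 0 := by linear_combination h + y₁*hx
    exact (mul_eq_zero.mp this).resolve_right hy
  · refine ⟨x₁/x₂, by field_simp, ?_⟩
    field_simp
    linear_combination -h

private lemma leftker (p00 p01 p10 p11 : ℂ) (hdet : p00*p11 - p01*p10 = 0)
    (htr : p00 + p11 ≠ 0) :
    ∃ u v, (u*p00 + v*p10 = 0) ∧ (u*p01 + v*p11 = 0) ∧ ¬(u = 0 ∧ v = 0) := by
  by_cases h : p00 = 0 ∧ p10 = 0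
  · refine ⟨p11, -p01, by linear_combination hdet, by ring, ?_⟩
    rintro ⟨h1, h2⟩
    exact htr (by rw [h.1, h1, add_zero])
  · refine ⟨-p10, p00, by ring, by linear_combination hdet, ?_⟩
    rintro ⟨h1, h2⟩
    exact h ⟨h2, neg_eq_zero.mp h1⟩

theorem stmt10 (M₀ M₁ : Matrix (Fin 2) (Fin 2) ℂ)
    (hM₀ : M₀.det = 1) (hM₁ : M₁.det = 1)
    (r₀ r₁ : ℂ)
    (hr₀0 : r₀ ≠ 0) (hr₀1 : r₀ ≠ 1) (hr₀m : r₀ ≠ -1)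
    (hr₁0 : r₁ ≠ 0) (hr₁1 : r₁ ≠ 1) (hr₁m : r₁ ≠ -1)
    (htr₀ : M₀.trace = r₀ + r₀⁻¹) (htr₁ : M₁.trace = r₁ + r₁⁻¹)
    (htr : Matrix.trace ((M₀ - r₀⁻¹ • (1 : Matrix (Fin 2) (Fin 2) ℂ)) * (M₁ - r₁ • 1)) = 0) :
    ((M₀ - r₀ • (1 : Matrix (Fin 2) (Fin 2) ℂ)) * (M₁ - r₁⁻¹ • 1) = 0 ∨
     (M₀ - r₀⁻¹ • (1 : Matrix (Fin 2) (Fin 2) ℂ)) * (M₁ - r₁ • 1) = 0) ∧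
    (M₀ * M₁ ≠ M₁ * M₀ →
      ∃ (f₀ f₁ : ℂ) (K : Matrix (Fin 2) (Fin 2) ℂ), K.det = 1 ∧
        K * M₀ = !![r₀, f₀; 0, r₀⁻¹] * K ∧
        K * M₁ = !![r₁, 0; f₁, r₁⁻¹] * K) := by
  obtain ⟨a, b, c, d, rfl⟩ : ∃ a b c d, M₀ = !![a,b;c,d] := ⟨_,_,_,_, Matrix.eta_fin_two M₀⟩
  obtain ⟨e, f, g, k, rfl⟩ : ∃ e f g k, M₁ = !![e,f;g,k] := ⟨_,_,_,_, Matrix.eta_fin_two M₁⟩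
  have hinv0 : r₀ * r₀⁻¹ = 1 := mul_inv_cancel₀ hr₀0
  have hinv1 : r₁ * r₁⁻¹ = 1 := mul_inv_cancel₀ hr₁0
  have hm0 : a*d - b*c = 1 := by simpa [Matrix.det_fin_two_of] using hM₀
  have hm1 : e*k - f*g = 1 := by simpa [Matrix.det_fin_two_of] using hM₁
  have ht0 : a + d = r₀ + r₀⁻¹ := by simpa [Matrix.trace_fin_two_of] using htr₀
  have ht1 : e + k = r₁ + r₁⁻¹ := by simpa [Matrix.trace_fin_two_of] using htr₁
  have hs : r₀ - r₀⁻¹ ≠ 0 := by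
    intro h
    have h2 : r₀*r₀ = 1 := by
      have he : r₀ = r₀⁻¹ := sub_eq_zero.mp h
      calc r₀*r₀ = r₀*r₀⁻¹ := by rw [← he]
      _ = 1 := hinv0
    rcases mul_self_eq_one_iff.mp h2 with h' | h'
    · exact hr₀1 h'
    · exact hr₀m h'
  have ht : r₁ - r₁⁻¹ ≠ 0 := by
    intro h
    have h2 : r₁*r₁ = 1 := by
      have he : r₁ = r₁⁻¹ := sub_eq_zero.mp h
      calc r₁*r₁ = r₁*r₁⁻¹ := by rw [← he]
      _ = 1 := hinv1
    rcases mul_self_eq_one_iff.mp h2 with h' | h'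
    · exact hr₁1 h'
    · exact hr₁m h'
  -- scalar form of htr
  have htrs := htr
  simp only [Matrix.trace_fin_two, Matrix.mul_apply, Fin.sum_univ_two, Matrix.sub_apply,
    Matrix.smul_apply, Matrix.one_apply, smul_eq_mul] at htrs
  norm_num at htrs
  -- determinants
  have hdP : ((!![a,b;c,d]) - r₀⁻¹ • (1 : Matrix (Fin 2) (Fin 2) ℂ)).det = 0 := by
    rw [Matrix.det_fin_two]
    simp only [Matrix.sub_apply, Matrix.smul_apply, Matrix.one_apply, smul_eq_mul]
    norm_num
    linear_combination hm0 - r₀⁻¹ * ht0 - hinv0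
  have hdP' : ((!![a,b;c,d]) - r₀ • (1 : Matrix (Fin 2) (Fin 2) ℂ)).det = 0 := by
    rw [Matrix.det_fin_two]
    simp only [Matrix.sub_apply, Matrix.smul_apply, Matrix.one_apply, smul_eq_mul]
    norm_num
    linear_combination hm0 - r₀ * ht0 - hinv0
  have hdQ : ((!![e,f;g,k]) - r₁ • (1 : Matrix (Fin 2) (Fin 2) ℂ)).det = 0 := by
    rw [Matrix.det_fin_two]
    simp only [Matrix.sub_apply, Matrix.smul_apply, Matrix.one_apply, smul_eq_mul]
    norm_num
    linear_combination hm1 - r₁ * ht1 - hinv1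
  have hdQ' : ((!![e,f;g,k]) - r₁⁻¹ • (1 : Matrix (Fin 2) (Fin 2) ℂ)).det = 0 := by
    rw [Matrix.det_fin_two]
    simp only [Matrix.sub_apply, Matrix.smul_apply, Matrix.one_apply, smul_eq_mul]
    norm_num
    linear_combination hm1 - r₁⁻¹ * ht1 - hinv1
  have htrA : (((!![a,b;c,d]) - r₀ • (1 : Matrix (Fin 2) (Fin 2) ℂ)) *
      ((!![e,f;g,k]) - r₁⁻¹ • 1)).trace = 0 := by
    simp only [Matrix.trace_fin_two, Matrix.mul_apply, Fin.sum_univ_two, Matrix.sub_apply,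
      Matrix.smul_apply, Matrix.one_apply, smul_eq_mul]
    norm_num
    linear_combination htrs + (r₁ - r₁⁻¹) * ht0 + (r₀⁻¹ - r₀) * ht1
  have hmain : ((!![a,b;c,d]) - r₀ • (1 : Matrix (Fin 2) (Fin 2) ℂ)) * ((!![e,f;g,k]) - r₁⁻¹ • 1) = 0 ∨
      ((!![a,b;c,d]) - r₀⁻¹ • (1 : Matrix (Fin 2) (Fin 2) ℂ)) * ((!![e,f;g,k]) - r₁ • 1) = 0 := by
    rcases keylem _ _ hdP hdQ htr with hB | hB'
    · exact Or.inr hB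
    rcases keylem _ _ hdP' hdQ' htrA with hA | hA'
    · exact Or.inl hA
    -- bad case: Q*P = 0 and Q'*P' = 0; derive P*Q = 0
    right
    have e00 := congrFun (congrFun hB' 0) 0
    have e01 := congrFun (congrFun hB' 0) 1
    have e10 := congrFun (congrFun hB' 1) 0
    have e11 := congrFun (congrFun hB' 1) 1
    have a00 := congrFun (congrFun hA' 0) 0
    have a01 := congrFun (congrFun hA' 0) 1
    have a10 := congrFun (congrFun hA' 1) 0
    have a11 := congrFun (congrFun hA' 1) 1
    simp only [Matrix.mul_apply, Fin.sum_univ_two, Matrix.sub_apply, Matrix.smul_apply,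
      Matrix.one_apply, smul_eq_mul, Matrix.zero_apply] at e00 e01 e10 e11 a00 a01 a10 a11
    norm_num at e00 e01 e10 e11 a00 a01 a10 a11
    have hdPs : (a - r₀⁻¹)*(d - r₀⁻¹) - b*c = 0 := by
      linear_combination hm0 - r₀⁻¹ * ht0 - hinv0
    ext i j
    fin_cases i <;> fin_cases j <;>
      simp only [Matrix.mul_apply, Fin.sum_univ_two, Matrix.sub_apply, Matrix.smul_apply,
        Matrix.one_apply, smul_eq_mul, Matrix.zero_apply, Fin.mk_zero, Fin.mk_one, Fin.isValue] <;>
      norm_num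
    · have hkey : (r₀ - r₀⁻¹) * ((a - r₀⁻¹)*(e - r₁) + b*g) = 0 := by
        linear_combination (a - r₀⁻¹)*e00 + b*e10 - (a - r₀⁻¹)*a00 - b*a10 -
          (r₁ - r₁⁻¹)*hdPs + (r₁ - r₁⁻¹)*(a - r₀⁻¹)*ht0
      have := (mul_eq_zero.mp hkey).resolve_left hs
      linear_combination this
    · have hkey : (r₀ - r₀⁻¹) * ((a - r₀⁻¹)*f + b*(k - r₁)) = 0 := by
        linear_combination (a - r₀⁻¹)*e01 + b*e11 - (a - r₀⁻¹)*a01 - b*a11 +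
          (r₁ - r₁⁻¹)*b*ht0
      have := (mul_eq_zero.mp hkey).resolve_left hs
      linear_combination this
    · have hkey : (r₀ - r₀⁻¹) * (c*(e - r₁) + (d - r₀⁻¹)*g) = 0 := by
        linear_combination c*e00 + (d - r₀⁻¹)*e10 - c*a00 - (d - r₀⁻¹)*a10 +
          (r₁ - r₁⁻¹)*c*ht0
      have := (mul_eq_zero.mp hkey).resolve_left hs
      linear_combination this
    · have hkey : (r₀ - r₀⁻¹) * (c*f + (d - r₀⁻¹)*(k - r₁)) = 0 := by
        linear_combination c*e01 + (d - r₀⁻¹)*e11 - c*a01 - (d - r₀⁻¹)*a11 -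
          (r₁ - r₁⁻¹)*hdPs + (r₁ - r₁⁻¹)*(d - r₀⁻¹)*ht0
      have := (mul_eq_zero.mp hkey).resolve_left hs
      linear_combination this
  refine ⟨hmain, fun hcomm => ?_⟩
  have hdPs : (a - r₀⁻¹)*(d - r₀⁻¹) - b*c = 0 := by
    linear_combination hm0 - r₀⁻¹ * ht0 - hinv0
  have hdQs : (e - r₁)*(k - r₁) - f*g = 0 := by
    linear_combination hm1 - r₁ * ht1 - hinv1
  have htrP : (a - r₀⁻¹) + (d - r₀⁻¹) ≠ 0 := by
    intro h; exact hs (by linear_combination h - ht0)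
  have htrQ : (e - r₁) + (k - r₁) ≠ 0 := by
    intro h; exact ht (by linear_combination ht1 - h)
  obtain ⟨u, v, hu1, hu2, hune⟩ :=
    leftker (a - r₀⁻¹) b c (d - r₀⁻¹) (by linear_combination hdPs) htrP
  obtain ⟨p₀, q₀, hp1₀, hp2₀, hpne⟩ :=
    leftker (e - r₁) f g (k - r₁) (by linear_combination hdQs) htrQ
  have hD0 : p₀*v - q₀*u ≠ 0 := by
    intro hD0
    obtain ⟨cc, hc1, hc2⟩ := prop2 p₀ q₀ u v hD0 hune
    have hcc : cc ≠ 0 := by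
      intro h0; exact hpne ⟨by rw [hc1, h0, zero_mul], by rw [hc2, h0, zero_mul]⟩
    have hQu1 : u*(e - r₁) + v*g = 0 := by
      have h' : cc * (u*(e - r₁) + v*g) = 0 := by
        linear_combination hp1₀ - (e - r₁)*hc1 - g*hc2
      exact (mul_eq_zero.mp h').resolve_left hcc
    have hQu2 : u*f + v*(k - r₁) = 0 := by
      have h' : cc * (u*f + v*(k - r₁)) = 0 := by
        linear_combination hp2₀ - f*hc1 - (k - r₁)*hc2
      exact (mul_eq_zero.mp h').resolve_left hcc
    have hsm : (r₀⁻¹ - r₀) ≠ 0 := fun hh => hs (by linear_combination -hh)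
    rcases hmain with hA | hB
    · have a00 := congrFun (congrFun hA 0) 0
      have a01 := congrFun (congrFun hA 0) 1
      have a10 := congrFun (congrFun hA 1) 0
      have a11 := congrFun (congrFun hA 1) 1
      simp only [Matrix.mul_apply, Fin.sum_univ_two, Matrix.sub_apply, Matrix.smul_apply,
        Matrix.one_apply, smul_eq_mul, Matrix.zero_apply] at a00 a01 a10 a11
      norm_num at a00 a01 a10 a11
      have hu0 : u = 0 := by
        have h' : ((r₀⁻¹ - r₀)*(r₁ - r₁⁻¹)) * u = 0 := by
          linear_combination u*a00 + v*a10 - (e - r₁⁻¹)*hu1 - g*hu2 - (r₀⁻¹ - r₀)*hQu1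
        rcases mul_eq_zero.mp h' with h'' | h''
        · rcases mul_eq_zero.mp h'' with h3 | h3
          · exact absurd h3 hsm
          · exact absurd h3 ht
        · exact h''
      have hv0 : v = 0 := by
        have h' : ((r₀⁻¹ - r₀)*(r₁ - r₁⁻¹)) * v = 0 := by
          linear_combination u*a01 + v*a11 - f*hu1 - (k - r₁⁻¹)*hu2 - (r₀⁻¹ - r₀)*hQu2
        rcases mul_eq_zero.mp h' with h'' | h''
        · rcases mul_eq_zero.mp h'' with h3 | h3
          · exact absurd h3 hsm
          · exact absurd h3 ht
        · exact h''
      exact hune ⟨hu0, hv0⟩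
    · have b00 := congrFun (congrFun hB 0) 0
      have b01 := congrFun (congrFun hB 0) 1
      have b10 := congrFun (congrFun hB 1) 0
      have b11 := congrFun (congrFun hB 1) 1
      simp only [Matrix.mul_apply, Fin.sum_univ_two, Matrix.sub_apply, Matrix.smul_apply,
        Matrix.one_apply, smul_eq_mul, Matrix.zero_apply] at b00 b01 b10 b11
      norm_num at b00 b01 b10 b11
      by_cases hD1 : u*b - v*(a - r₀⁻¹) ≠ 0
      · obtain ⟨hX, hY⟩ := solve2 u v (a - r₀⁻¹) b (e - r₁) g hQu1 (by linear_combination b00) hD1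
        obtain ⟨hX2, hY2⟩ := solve2 u v (a - r₀⁻¹) b f (k - r₁) hQu2 (by linear_combination b01) hD1
        exact htrQ (by rw [hX, hY2, add_zero])
      · by_cases hD2 : u*(d - r₀⁻¹) - v*c ≠ 0
        · obtain ⟨hX, hY⟩ := solve2 u v c (d - r₀⁻¹) (e - r₁) g hQu1 (by linear_combination b10) hD2
          obtain ⟨hX2, hY2⟩ := solve2 u v c (d - r₀⁻¹) f (k - r₁) hQu2 (by linear_combination b11) hD2
          exact htrQ (by rw [hX, hY2, add_zero])
        · have hd1 : u*b - v*(a - r₀⁻¹) = 0 := not_ne_iff.mp hD1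
          have hd2 : u*(d - r₀⁻¹) - v*c = 0 := not_ne_iff.mp hD2
          obtain ⟨al, hal1, hal2⟩ := prop2 (a - r₀⁻¹) b u v (by linear_combination -hd1) hune
          obtain ⟨ga, hga1, hga2⟩ := prop2 c (d - r₀⁻¹) u v (by linear_combination -hd2) hune
          have key0 : (al*u + ga*v) * u = 0 := by linear_combination hu1 - u*hal1 - v*hga1
          have key1 : (al*u + ga*v) * v = 0 := by linear_combination hu2 - u*hal2 - v*hga2
          have hzz : al*u + ga*v = 0 := by
            rcases not_and_or.mp hune with h' | h'
            · exact (mul_eq_zero.mp key0).resolve_right h'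
            · exact (mul_eq_zero.mp key1).resolve_right h'
          exact hs (by linear_combination -ht0 + hal1 + hga2 + hzz)
  obtain ⟨p, hpd⟩ : ∃ x : ℂ, x = p₀/(p₀*v - q₀*u) := ⟨_, rfl⟩
  obtain ⟨q, hqd⟩ : ∃ x : ℂ, x = q₀/(p₀*v - q₀*u) := ⟨_, rfl⟩
  have hD : p*v - q*u = 1 := by
    rw [hpd, hqd]; field_simp
  have hDne : p*v - q*u ≠ 0 := ne_of_eq_of_ne hD one_ne_zero
  have hp1 : p*(e - r₁) + q*g = 0 := by
    rw [hpd, hqd]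
    rw [div_mul_eq_mul_div, div_mul_eq_mul_div, ← add_div, div_eq_zero_iff]
    left; linear_combination hp1₀
  have hp2 : p*f + q*(k - r₁) = 0 := by
    rw [hpd, hqd]
    rw [div_mul_eq_mul_div, div_mul_eq_mul_div, ← add_div, div_eq_zero_iff]
    left; linear_combination hp2₀
  have hHz1 : (p*a + q*c - r₀*p)*(a - r₀⁻¹) + (p*b + q*d - r₀*q)*c = 0 := by
    linear_combination (-p)*hm0 + p*hinv0 + (p*a + q*c)*ht0
  have hHz2 : (p*a + q*c - r₀*p)*b + (p*b + q*d - r₀*q)*(d - r₀⁻¹) = 0 := by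
    linear_combination (-q)*hm0 + q*hinv0 + (p*b + q*d)*ht0
  have hα : (p*a + q*c - r₀*p)*v - (p*b + q*d - r₀*q)*u = 0 := by
    by_contra hN0
    have hk1 : p*(a - r₀⁻¹) + q*c = 0 := by
      have h' : ((p*a + q*c - r₀*p)*v - (p*b + q*d - r₀*q)*u) * (p*(a - r₀⁻¹) + q*c) = 0 := by
        linear_combination hHz1 - (p*(p*b + q*d - r₀*q) - q*(p*a + q*c - r₀*p))*hu1 +
          ((p*a + q*c - r₀*p)*(a - r₀⁻¹) + (p*b + q*d - r₀*q)*c)*hD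
      exact (mul_eq_zero.mp h').resolve_left hN0
    have hk2 : p*b + q*(d - r₀⁻¹) = 0 := by
      have h' : ((p*a + q*c - r₀*p)*v - (p*b + q*d - r₀*q)*u) * (p*b + q*(d - r₀⁻¹)) = 0 := by
        linear_combination hHz2 - (p*(p*b + q*d - r₀*q) - q*(p*a + q*c - r₀*p))*hu2 +
          ((p*a + q*c - r₀*p)*b + (p*b + q*d - r₀*q)*(d - r₀⁻¹))*hD
      exact (mul_eq_zero.mp h').resolve_left hN0
    obtain ⟨hX, hY⟩ := solve2 p q u v (a - r₀⁻¹) c hk1 hu1 hDne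
    obtain ⟨hX2, hY2⟩ := solve2 p q u v b (d - r₀⁻¹) hk2 hu2 hDne
    exact hs (by linear_combination -ht0 + hX + hY2)
  have hHw1 : (u*e + v*g - r₁⁻¹*u)*(e - r₁) + (u*f + v*k - r₁⁻¹*v)*g = 0 := by
    linear_combination (-u)*hm1 + u*hinv1 + (u*e + v*g)*ht1
  have hHw2 : (u*e + v*g - r₁⁻¹*u)*f + (u*f + v*k - r₁⁻¹*v)*(k - r₁) = 0 := by
    linear_combination (-v)*hm1 + v*hinv1 + (u*f + v*k)*ht1
  have hβ : p*(u*f + v*k - r₁⁻¹*v) - q*(u*e + v*g - r₁⁻¹*u) = 0 := by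
    by_contra hM0
    have hQ1 : u*(e - r₁) + v*g = 0 := by
      have h' : (p*(u*f + v*k - r₁⁻¹*v) - q*(u*e + v*g - r₁⁻¹*u)) * (u*(e - r₁) + v*g) = 0 := by
        linear_combination hHw1 - ((u*e + v*g - r₁⁻¹*u)*v - (u*f + v*k - r₁⁻¹*v)*u)*hp1 +
          ((u*e + v*g - r₁⁻¹*u)*(e - r₁) + (u*f + v*k - r₁⁻¹*v)*g)*hD
      exact (mul_eq_zero.mp h').resolve_left hM0
    have hQ2 : u*f + v*(k - r₁) = 0 := by
      have h' : (p*(u*f + v*k - r₁⁻¹*v) - q*(u*e + v*g - r₁⁻¹*u)) * (u*f + v*(k - r₁)) = 0 := by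
        linear_combination hHw2 - ((u*e + v*g - r₁⁻¹*u)*v - (u*f + v*k - r₁⁻¹*v)*u)*hp2 +
          ((u*e + v*g - r₁⁻¹*u)*f + (u*f + v*k - r₁⁻¹*v)*(k - r₁))*hD
      exact (mul_eq_zero.mp h').resolve_left hM0
    obtain ⟨hX, hY⟩ := solve2 p q u v (e - r₁) g hp1 hQ1 hDne
    obtain ⟨hX2, hY2⟩ := solve2 p q u v f (k - r₁) hp2 hQ2 hDne
    exact ht (by linear_combination ht1 - hX - hY2)
  refine ⟨(p*(p*b + q*d - r₀*q) - q*(p*a + q*c - r₀*p)),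
          ((u*e + v*g - r₁⁻¹*u)*v - (u*f + v*k - r₁⁻¹*v)*u),
          !![p, q; u, v], ?_, ?_, ?_⟩
  · rw [Matrix.det_fin_two_of]; exact hD
  · ext i j
    fin_cases i <;> fin_cases j <;>
      simp only [Matrix.mul_apply, Fin.sum_univ_two, Fin.mk_zero, Fin.mk_one, Fin.isValue] <;>
      norm_num
    · linear_combination p*hα - (p*a + q*c - r₀*p)*hD
    · linear_combination q*hα - (p*b + q*d - r₀*q)*hD
    · linear_combination hu1
    · linear_combination hu2
  · ext i j
    fin_cases i <;> fin_cases j <;>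
      simp only [Matrix.mul_apply, Fin.sum_univ_two, Fin.mk_zero, Fin.mk_one, Fin.isValue] <;>
      norm_num
    · linear_combination hp1
    · linear_combination hp2
    · linear_combination u*hβ - (u*e + v*g - r₁⁻¹*u)*hD
    · linear_combination v*hβ - (u*f + v*k - r₁⁻¹*v)*hD
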